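/- The derivative of Δ(ε₁) = -w₁·ε₁ + w₂·ε₂(ε₁), where ε₂(ε₁) = ((σ² + g·p₂)/g)·(1 - ((σ² + g·p₁)/(σ² + g·(p₁+ε₁)))^{w₁/w₂}), is Δ'(ε₁) = w₁·[((σ² + g·p₂)/(σ² + g·(p₁+ε₁)))·((σ² + g·p₁)/(σ² + g·(p₁+ε₁)))^{w₁/w₂} - 1], and Δ'(0) > 0 whenever p₂ > p₁ ≥ 0. -/

import Mathlib

theorem stmt_7 (g σ2 p₁ p₂ w₁ w₂ : ℝ) (hg : 0 < g) (hσ : 0 < σ2)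
    (hp₁ : 0 ≤ p₁) (hp : p₁ < p₂) (hw₁ : 0 < w₁) (hw₂ : 0 < w₂) :
    (∀ ε₁ : ℝ, 0 ≤ ε₁ →
      HasDerivAt (fun e : ℝ => -(w₁ * e) + w₂ * ((σ2 + g * p₂) / g *
          (1 - ((σ2 + g * p₁) / (σ2 + g * (p₁ + e))) ^ (w₁ / w₂))))
        (w₁ * ((σ2 + g * p₂) / (σ2 + g * (p₁ + ε₁)) *
          ((σ2 + g * p₁) / (σ2 + g * (p₁ + ε₁))) ^ (w₁ / w₂) - 1)) ε₁) ∧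
    0 < w₁ * ((σ2 + g * p₂) / (σ2 + g * (p₁ + 0)) *
          ((σ2 + g * p₁) / (σ2 + g * (p₁ + 0))) ^ (w₁ / w₂) - 1) := by
  have hc : 0 < σ2 + g * p₁ := by positivity
  constructor
  · intro ε₁ hε
    have hdpos : 0 < σ2 + g * (p₁ + ε₁) := by positivity
    have hdne : σ2 + g * (p₁ + ε₁) ≠ 0 := hdpos.ne'
    have hq : 0 < (σ2 + g * p₁) / (σ2 + g * (p₁ + ε₁)) := div_pos hc hdpos
    have hd : HasDerivAt (fun e : ℝ => σ2 + g * (p₁ + e)) g ε₁ := by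
      simpa using (((hasDerivAt_id ε₁).const_add p₁).const_mul g).const_add σ2
    have hquot : HasDerivAt (fun e : ℝ => (σ2 + g * p₁) / (σ2 + g * (p₁ + e)))
        ((0 * (σ2 + g * (p₁ + ε₁)) - (σ2 + g * p₁) * g) / (σ2 + g * (p₁ + ε₁)) ^ 2) ε₁ :=
      (hasDerivAt_const ε₁ (σ2 + g * p₁)).div hd hdne
    have hr : HasDerivAt (fun e : ℝ => ((σ2 + g * p₁) / (σ2 + g * (p₁ + e))) ^ (w₁ / w₂))
        ((0 * (σ2 + g * (p₁ + ε₁)) - (σ2 + g * p₁) * g) / (σ2 + g * (p₁ + ε₁)) ^ 2 * (w₁ / w₂) *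
          ((σ2 + g * p₁) / (σ2 + g * (p₁ + ε₁))) ^ (w₁ / w₂ - 1)) ε₁ :=
      hquot.rpow_const (Or.inl hq.ne')
    have hmain : HasDerivAt (fun e : ℝ => -(w₁ * e) + w₂ * ((σ2 + g * p₂) / g *
          (1 - ((σ2 + g * p₁) / (σ2 + g * (p₁ + e))) ^ (w₁ / w₂))))
        (-w₁ + w₂ * ((σ2 + g * p₂) / g *
          (0 - ((0 * (σ2 + g * (p₁ + ε₁)) - (σ2 + g * p₁) * g) / (σ2 + g * (p₁ + ε₁)) ^ 2 * (w₁ / w₂) *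
            ((σ2 + g * p₁) / (σ2 + g * (p₁ + ε₁))) ^ (w₁ / w₂ - 1))))) ε₁ := by
      have h1 : HasDerivAt (fun e : ℝ => -(w₁ * e)) (-w₁) ε₁ := by
        simpa using ((hasDerivAt_id ε₁).const_mul w₁).fun_neg
      exact h1.add ((((hasDerivAt_const ε₁ (1:ℝ)).sub hr).const_mul ((σ2 + g * p₂) / g)).const_mul w₂)
    convert hmain using 1
    have hsub : ((σ2 + g * p₁) / (σ2 + g * (p₁ + ε₁))) ^ (w₁ / w₂ - 1)
        = ((σ2 + g * p₁) / (σ2 + g * (p₁ + ε₁))) ^ (w₁ / w₂)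
          / ((σ2 + g * p₁) / (σ2 + g * (p₁ + ε₁))) := by
      rw [Real.rpow_sub hq, Real.rpow_one]
    rw [hsub]
    field_simp
    ring
  · simp only [add_zero]
    have hq1 : ((σ2 + g * p₁) / (σ2 + g * p₁)) ^ (w₁ / w₂) = 1 := by
      rw [div_self hc.ne', Real.one_rpow]
    rw [hq1, mul_one]
    have : 1 < (σ2 + g * p₂) / (σ2 + g * p₁) := by
      rw [lt_div_iff₀ hc]
      nlinarith
    nlinarith
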